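/- For coprime integers r ≥ 1 and s, the Dieudonné K-module (N_{r,s}, φ_{r,s}) is simple: the only 𝒦-subspaces W ⊆ 𝒦^r with φ_{r,s}(W) ⊆ W are W = 0 and W = 𝒦^r. -/

import Mathlib

/- STATEMENT 2: For coprime integers r ≥ 1 and s, the Dieudonné K-module (N_{r,s}, φ_{r,s})
is simple: the only 𝒦-subspaces W ⊆ 𝒦^r with φ_{r,s}(W) ⊆ W are W = 0 and W = 𝒦^r. -/

noncomputable section

set_option maxHeartbeats 1000000
set_option synthInstance.maxHeartbeats 1000000

/-- The uniformizer `π` of `k⟦π⟧`, viewed inside the Laurent series field `𝒦 = k⸨π⸩`. -/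
def piL (k : Type*) [Field k] : LaurentSeries k := HahnSeries.single (1 : ℤ) (1 : k)

/-- The `σ`-semilinear map `φ_{r,s}` on `𝒦^r`, given by
`φ_{r,s}(a₀, …, a_{r-1}) = (π^s · σ(a_{r-1}), σ(a₀), …, σ(a_{r-2}))`. -/
def phiRS {k : Type*} [Field k] (σ : LaurentSeries k ≃+* LaurentSeries k) (r : ℕ) (s : ℤ)
    (a : Fin r → LaurentSeries k) : Fin r → LaurentSeries k := fun i =>
  if _h : (i : ℕ) = 0 then piL k ^ s * σ (a ⟨r - 1, by have := i.isLt; omega⟩)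
  else σ (a ⟨(i : ℕ) - 1, by have := i.isLt; omega⟩)

namespace SimpleNRS

open Module Matrix

/-- An abstract version of `phiRS`, over an arbitrary field. -/
def phiA {F : Type*} [Field F] (σ : F ≃+* F) (π : F) (r : ℕ)
    (a : Fin r → F) : Fin r → F := fun i =>
  if _h : (i : ℕ) = 0 then π * σ (a ⟨r - 1, by have := i.isLt; omega⟩)
  else σ (a ⟨(i : ℕ) - 1, by have := i.isLt; omega⟩)

lemma exists_det_ne_zero {F : Type*} [Field F] {m d : ℕ} (v : Fin d → (Fin m → F))
    (hv : LinearIndependent F v) :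
    ∃ I : Fin d → Fin m, (Matrix.of fun a j => v j (I a)).det ≠ 0 := by
  classical
  let N : Matrix (Fin d) (Fin m) F := Matrix.of v
  have hrank : N.rank = d := by
    have := hv.rank_matrix (M := N)
    simpa using this
  have h2 : Module.finrank F (Submodule.span F (Set.range Nᵀ)) = d := by
    rw [show Set.range Nᵀ = Set.range Nᵀ.row from rfl, ← Matrix.rank_eq_finrank_span_row,
      Matrix.rank_transpose]
    exact hrank
  have hspan_top : Submodule.span F (Set.range Nᵀ) = ⊤ := by
    apply Submodule.eq_top_of_finrank_eq
    rw [h2, Module.finrank_fin_fun]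
  obtain ⟨b, hbsub, hbspan, hbind⟩ := exists_linearIndependent F (Set.range Nᵀ)
  rw [hspan_top] at hbspan
  haveI : Fintype b := hbind.setFinite.fintype
  let B : Basis b F (Fin d → F) := Basis.mk hbind (by rw [Subtype.range_coe, hbspan])
  have hcard : Fintype.card b = d := by
    rw [← Module.finrank_eq_card_basis B, Module.finrank_fin_fun]
  let g : Fin d ≃ b := (Fintype.equivFinOfCardEq hcard).symm
  have hmem : ∀ x : b, (x : Fin d → F) ∈ Set.range Nᵀ := fun x => hbsub x.2
  choose idx hidx using hmem
  refine ⟨fun a => idx (g a), ?_⟩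
  have hrows : LinearIndependent F
      (fun a : Fin d => (Matrix.of fun a j => v j (idx (g a))) a) := by
    have he : (fun a : Fin d => (Matrix.of fun a j => v j (idx (g a))) a)
        = fun a : Fin d => ((g a : Fin d → F)) := by
      funext a
      have h3 : (Matrix.of fun a j => v j (idx (g a))) a = Nᵀ (idx (g a)) := rfl
      rw [h3, hidx]
    rw [he]
    exact hbind.comp g g.injective
  have hu := Matrix.linearIndependent_rows_iff_isUnit.mp hrows
  exact ((Matrix.isUnit_iff_isUnit_det _).mp hu).ne_zero

section Abstract

variable {F : Type*} [Field F] {σ : F ≃+* F} {π : F} {r : ℕ}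

lemma phiA_add (a b : Fin r → F) :
    phiA σ π r (a + b) = phiA σ π r a + phiA σ π r b := by
  funext i
  simp only [phiA, Pi.add_apply]
  split_ifs <;> simp [map_add, mul_add]

lemma phiA_smul (x : F) (a : Fin r → F) :
    phiA σ π r (x • a) = σ x • phiA σ π r a := by
  funext i
  simp only [phiA, Pi.smul_apply, smul_eq_mul]
  split_ifs <;> simp [_root_.map_mul, mul_comm, mul_left_comm]

lemma index_congr (a : Fin r → F) {x y : ℕ} (hx : x < r) (hy : y < r)
    (h : x = y) : a ⟨x, hx⟩ = a ⟨y, hy⟩ := by congr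

lemma phiA_iter (hπ : σ π = π) (t : ℕ) (ht : t ≤ r)
    (a : Fin r → F) (i : Fin r) :
    (phiA σ π r)^[t] a i =
      if h : (i : ℕ) < t then
        π * σ^[t] (a ⟨(i : ℕ) + (r - t), by have := i.isLt; omega⟩)
      else σ^[t] (a ⟨(i : ℕ) - t, by have := i.isLt; omega⟩) := by
  induction t generalizing i with
  | zero =>
      rw [dif_neg (by omega)]
      simp only [Function.iterate_zero, id_eq]
      exact congrArg a (by rw [Fin.ext_iff]; simp)
  | succ t IH =>
      have hi := i.isLt
      have ht' : t ≤ r := by omega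
      rw [Function.iterate_succ_apply']
      have hit : ∀ x, σ (σ^[t] x) = σ^[t+1] x := fun x =>
        (Function.iterate_succ_apply' (⇑σ) t x).symm
      by_cases h0 : (i : ℕ) = 0
      · simp only [phiA]
        rw [dif_pos h0, IH ht', dif_neg (by simp only [Fin.val_mk]; omega),
          hit, dif_pos (show (i : ℕ) < t + 1 by omega)]
        refine congrArg _ (congrArg _ ?_)
        apply index_congr
        simp only [Fin.val_mk]
        omega
      · simp only [phiA]
        rw [dif_neg h0, IH ht']
        by_cases h1 : (i : ℕ) - 1 < t
        · rw [dif_pos (by simp only [Fin.val_mk]; omega :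
              ((⟨(i : ℕ) - 1, by omega⟩ : Fin r) : ℕ) < t),
            _root_.map_mul, hπ, hit, dif_pos (show (i : ℕ) < t + 1 by omega)]
          refine congrArg _ (congrArg _ ?_)
          apply index_congr
          simp only [Fin.val_mk]
          omega
        · rw [dif_neg (by simp only [Fin.val_mk]; omega :
              ¬ ((⟨(i : ℕ) - 1, by omega⟩ : Fin r) : ℕ) < t),
            hit, dif_neg (show ¬ (i : ℕ) < t + 1 by omega)]
          refine congrArg _ ?_
          apply index_congr
          simp only [Fin.val_mk]
          omega

lemma phiA_iter_r (hπ : σ π = π) (a : Fin r → F)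
    (i : Fin r) : (phiA σ π r)^[r] a i = π * σ^[r] (a i) := by
  have hi := i.isLt
  rw [phiA_iter hπ r le_rfl, dif_pos hi]
  refine congrArg _ (congrArg _ ?_)
  have h : (⟨(i : ℕ) + (r - r), by omega⟩ : Fin r) = i := by
    rw [Fin.ext_iff]; simp only [Fin.val_mk]; omega
  rw [h]

/-- Abstract simplicity theorem.  Over an arbitrary field `F` with automorphism `σ` and
a `σ`-fixed nonzero element `π`, given an "order" function `o` which is additive on
products of nonzero elements and `σ`-invariant, any subspace of `F^r` stable under
`phiA σ π r` is trivial, provided `r ∤ d · o(π)` for all `0 < d < r`. -/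
theorem simple_abstract (σ : F ≃+* F) (π : F) (hπ0 : π ≠ 0) (hσπ : σ π = π)
    (o : F → ℤ) (homul : ∀ x y, x ≠ 0 → y ≠ 0 → o (x * y) = o x + o y)
    (hoσ : ∀ x, x ≠ 0 → o (σ x) = o x)
    (hr : 1 ≤ r)
    (hcond : ∀ d : ℕ, 0 < d → d < r → ¬ ((r : ℤ) ∣ (d : ℤ) * o π))
    (W : Submodule F (Fin r → F))
    (hW : ∀ a ∈ W, phiA σ π r a ∈ W) :
    W = ⊥ ∨ W = ⊤ := by
  classical
  by_contra hcon
  push_neg at hcon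
  obtain ⟨hWbot, hWtop⟩ := hcon
  set φ : (Fin r → F) → (Fin r → F) := phiA σ π r with hφdef
  -- basic order facts
  have ho1 : o 1 = 0 := by
    have := homul 1 1 one_ne_zero one_ne_zero
    rw [mul_one] at this
    omega
  have hopow : ∀ n : ℕ, o (π ^ n) = (n : ℤ) * o π := by
    intro n
    induction n with
    | zero => simpa using ho1
    | succ n IH =>
        rw [pow_succ, homul _ _ (pow_ne_zero _ hπ0) hπ0, IH]
        push_cast
        ring
  have hσne : ∀ x : F, x ≠ 0 → σ x ≠ 0 := fun x hx h =>
    hx (by simpa using σ.injective (h.trans (map_zero σ).symm))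
  have hoiter : ∀ (t : ℕ) (x : F), x ≠ 0 → σ^[t] x ≠ 0 ∧ o (σ^[t] x) = o x := by
    intro t
    induction t with
    | zero => exact fun x hx => ⟨hx, rfl⟩
    | succ t IH =>
        intro x hx
        rw [Function.iterate_succ_apply']
        exact ⟨hσne _ (IH x hx).1, by rw [hoσ _ (IH x hx).1, (IH x hx).2]⟩
  -- iteration formula
  have hiterr : ∀ (a : Fin r → F) (i : Fin r), φ^[r] a i = π * σ^[r] (a i) :=
    fun a i => phiA_iter_r hσπ a i
  -- injectivity of φ
  have hinjr : Function.Injective (φ^[r]) := by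
    intro a b hab
    funext i
    have h1 := congrFun hab i
    rw [hiterr, hiterr] at h1
    have h2 := mul_left_cancel₀ hπ0 h1
    exact Function.Injective.iterate σ.injective r h2
  have hinj : Function.Injective φ := by
    intro a a' haa
    apply hinjr
    have hsplit : ∀ x : Fin r → F, φ^[r] x = φ^[r-1] (φ x) := by
      intro x
      rw [← Function.iterate_succ_apply φ (r-1) x, Nat.succ_eq_add_one,
        Nat.sub_add_cancel hr]
    have h1 := hsplit a
    rw [haa] at h1
    exact h1.trans (hsplit a').symm
  -- the additive hom
  let Φ : (Fin r → F) →+ (Fin r → F) := AddMonoidHom.mk' φ phiA_add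
  -- dimension
  set d := finrank F W with hd
  have hd_pos : 0 < d :=
    Nat.pos_of_ne_zero (fun h0 => hWbot (Submodule.finrank_eq_zero.mp h0))
  have hd_lt : d < r := by
    have := Submodule.finrank_lt hWtop
    rwa [Module.finrank_fin_fun] at this
  -- basis of W
  let b : Basis (Fin d) F W := Module.finBasis F W
  let w : Fin d → (Fin r → F) := fun j => (b j : Fin r → F)
  have hw_mem : ∀ j, w j ∈ W := fun j => (b j).2
  have hw_li : LinearIndependent F w :=
    b.linearIndependent.map' W.subtype W.ker_subtype
  -- matrix of φ on W
  let c : Matrix (Fin d) (Fin d) F :=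
    Matrix.of fun j t => (b.repr ⟨φ (w j), hW _ (hw_mem j)⟩) t
  have hc : ∀ j, φ (w j) = ∑ t, c j t • w t := by
    intro j
    have h1 := b.sum_repr ⟨φ (w j), hW _ (hw_mem j)⟩
    have h2 := congrArg (Submodule.subtype W) h1
    rw [map_sum] at h2
    simpa [c, w] using h2.symm
  -- linear combinations
  let lc : (Fin d → F) → (Fin r → F) := fun u => ∑ t, u t • w t
  have hlc : ∀ u, φ (lc u) = lc (Matrix.vecMul (fun t => σ (u t)) c) := by
    intro u
    have h1 : φ (lc u) = ∑ t, σ (u t) • φ (w t) := by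
      have := map_sum Φ (fun t => u t • w t) Finset.univ
      refine this.trans (Finset.sum_congr rfl fun t _ => ?_)
      exact phiA_smul (u t) (w t)
    rw [h1]
    have h2 : ∀ t, σ (u t) • φ (w t) = ∑ l, (σ (u t) * c t l) • w l := by
      intro t
      rw [hc t, Finset.smul_sum]
      exact Finset.sum_congr rfl fun l _ => by rw [smul_smul]
    rw [Finset.sum_congr rfl fun t _ => h2 t, Finset.sum_comm]
    refine Finset.sum_congr rfl fun l _ => ?_
    rw [← Finset.sum_smul]
    congr 1
  -- iterated matrices
  let C : ℕ → Matrix (Fin d) (Fin d) F := fun t => Nat.rec 1 (fun _ M => (M.map σ) * c) t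
  have hCsucc : ∀ t, C (t+1) = ((C t).map σ) * c := fun t => rfl
  have hCiter : ∀ t j, φ^[t] (w j) = lc (C t j) := by
    intro t
    induction t with
    | zero =>
        intro j
        simp only [Function.iterate_zero, id_eq]
        show w j = ∑ t, (1 : Matrix (Fin d) (Fin d) F) j t • w t
        simp [Matrix.one_apply, ite_smul]
    | succ t IH =>
        intro j
        rw [Function.iterate_succ_apply', IH j, hlc]
        congr 1
  -- linear independence gives injectivity of lc
  have hlczero : ∀ u, lc u = 0 → u = 0 := by
    intro u hu
    have := Fintype.linearIndependent_iff.mp hw_li u hu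
    funext t
    exact this t
  -- det c ≠ 0
  have hdetc : c.det ≠ 0 := by
    intro h0
    obtain ⟨u, hu0, huc⟩ := Matrix.exists_vecMul_eq_zero_iff.mpr h0
    have hφu : φ (lc (fun t => σ.symm (u t))) = 0 := by
      rw [hlc]
      have hres : (fun t => σ ((fun t => σ.symm (u t)) t)) = u :=
        funext fun t => σ.apply_symm_apply (u t)
      rw [hres, huc]
      simp [lc]
    have h1 : lc (fun t => σ.symm (u t)) = 0 := by
      apply hinj
      rw [hφu]
      exact (map_zero Φ).symm
    have h2 := hlczero _ h1
    apply hu0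
    funext t
    have h3 := congrFun h2 t
    simp only [Pi.zero_apply] at h3 ⊢
    have := congrArg σ h3
    rwa [σ.apply_symm_apply, map_zero] at this
  -- order of det C t
  have hdetC : ∀ t, (C t).det ≠ 0 ∧ o (C t).det = (t : ℤ) * o c.det := by
    intro t
    induction t with
    | zero => simp [show C 0 = 1 from rfl, ho1]
    | succ t IH =>
        have hmap : ((C t).map σ).det = σ ((C t).det) := (RingEquiv.map_det σ (C t)).symm
        have hσdne : σ ((C t).det) ≠ 0 := hσne _ IH.1
        constructor
        · rw [hCsucc, Matrix.det_mul, hmap]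
          exact mul_ne_zero hσdne hdetc
        · rw [hCsucc, Matrix.det_mul, hmap,
            homul _ _ hσdne hdetc, hoσ _ IH.1, IH.2]
          push_cast
          ring
  -- submatrix with nonzero determinant
  obtain ⟨I, hI⟩ := exists_det_ne_zero w hw_li
  set A : Matrix (Fin d) (Fin d) F := Matrix.of fun a j => w j (I a) with hA
  -- the matrix equation
  have hEq : π • (A.map (σ^[r])) = A * (C r)ᵀ := by
    ext a j
    simp only [Matrix.smul_apply, Matrix.map_apply, smul_eq_mul, Matrix.mul_apply,
      Matrix.transpose_apply, hA, Matrix.of_apply]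
    have h1 := hiterr (w j) (I a)
    have h2 := congrFun (hCiter r j) (I a)
    rw [h2] at h1
    rw [← h1]
    simp only [lc, Finset.sum_apply, Pi.smul_apply, smul_eq_mul]
    exact Finset.sum_congr rfl fun t _ => mul_comm _ _
  -- determinants
  have hmapA : ∀ (t : ℕ) (M : Matrix (Fin d) (Fin d) F),
      (M.map (σ^[t])).det = σ^[t] M.det := by
    intro t
    induction t with
    | zero => intro M; simp [Matrix.map_id]
    | succ t IH =>
        intro M
        have h1 : M.map (σ^[t+1]) = (M.map σ).map (σ^[t]) := by
          rw [Matrix.map_map]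
          rfl
        have h2 : (M.map ⇑σ).det = σ M.det := (RingEquiv.map_det σ M).symm
        rw [h1, IH, h2, Function.iterate_succ_apply]
  have hdetEq : π ^ d * σ^[r] A.det = A.det * (C r).det := by
    have h1 := congrArg Matrix.det hEq
    rw [Matrix.det_smul, Matrix.det_mul, Matrix.det_transpose, hmapA, Fintype.card_fin] at h1
    exact h1
  have hτA := hoiter r A.det hI
  have hCr := hdetC r
  have hordL : o (π ^ d * σ^[r] A.det) = (d : ℤ) * o π + o A.det := by
    rw [homul _ _ (pow_ne_zero _ hπ0) hτA.1, hτA.2, hopow]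
  have hordR : o (A.det * (C r).det) = o A.det + (r : ℤ) * o c.det := by
    rw [homul _ _ hI hCr.1, hCr.2]
  have key : (d : ℤ) * o π = (r : ℤ) * o c.det := by
    have h2 := congrArg o hdetEq
    rw [hordL, hordR] at h2
    omega
  exact hcond d hd_pos hd_lt ⟨o c.det, key⟩

end Abstract

variable {k : Type*} [Field k]

lemma piL_ne_zero : piL k ≠ 0 := HahnSeries.single_ne_zero one_ne_zero

lemma order_piL : (piL k).order = 1 := HahnSeries.order_single one_ne_zero

lemma order_inv (x : LaurentSeries k) (hx : x ≠ 0) : (x⁻¹).order = -x.order := by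
  have h1 : x * x⁻¹ = 1 := mul_inv_cancel₀ hx
  have h2 : (x * x⁻¹).order = x.order + (x⁻¹).order :=
    HahnSeries.order_mul hx (inv_ne_zero hx)
  rw [h1, HahnSeries.order_one] at h2
  omega

lemma order_piL_zpow (n : ℤ) : ((piL k) ^ n).order = n := by
  cases n with
  | ofNat m =>
      rw [Int.ofNat_eq_coe, zpow_natCast, HahnSeries.order_pow, order_piL]
      simp
  | negSucc m =>
      rw [zpow_negSucc, order_inv _ (pow_ne_zero _ piL_ne_zero), HahnSeries.order_pow,
        order_piL]
      simp [Int.negSucc_eq]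

lemma piL_zpow_ne_zero (n : ℤ) : (piL k) ^ n ≠ (0 : LaurentSeries k) :=
  zpow_ne_zero n piL_ne_zero

variable {q : ℕ} (hq : q ≠ 0) {σ : LaurentSeries k ≃+* LaurentSeries k}
  (hσ : ∀ (x : LaurentSeries k) (n : ℤ), (σ x).coeff n = x.coeff n ^ q)

include hq hσ

lemma sigma_piL : σ (piL k) = piL k := by
  ext n
  rw [hσ]
  by_cases h : n = 1 <;> simp [piL, HahnSeries.coeff_single, h, hq]

lemma order_sigma (x : LaurentSeries k) (hx : x ≠ 0) : (σ x).order = x.order := by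
  have hσx : σ x ≠ 0 := fun h => hx (by simpa using σ.injective (h.trans (map_zero σ).symm))
  refine le_antisymm ?_ ?_
  · apply HahnSeries.order_le_of_coeff_ne_zero
    rw [hσ]
    exact pow_ne_zero _ (HahnSeries.coeff_order_eq_zero.not.2 hx)
  · apply HahnSeries.order_le_of_coeff_ne_zero
    have := HahnSeries.coeff_order_eq_zero.not.2 hσx
    rw [hσ] at this
    exact fun h => this (by rw [h, zero_pow hq])

end SimpleNRS

open SimpleNRS in
theorem simple_NRS
    (p e : ℕ) [Fact p.Prime] (he : 0 < e)
    (k : Type*) [Field k] [IsAlgClosed k] [CharP k p]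
    (σ : LaurentSeries k ≃+* LaurentSeries k)
    (hσ : ∀ (x : LaurentSeries k) (n : ℤ), (σ x).coeff n = x.coeff n ^ p ^ e)
    (r : ℕ) (hr : 1 ≤ r) (s : ℤ) (hrs : Int.gcd (r : ℤ) s = 1)
    (W : Submodule (LaurentSeries k) (Fin r → LaurentSeries k))
    (hW : ∀ a ∈ W, phiRS σ r s a ∈ W) :
    W = ⊥ ∨ W = ⊤ := by
  have hq : p ^ e ≠ 0 := pow_ne_zero _ (Nat.Prime.ne_zero Fact.out)
  refine simple_abstract σ (piL k ^ s) (piL_zpow_ne_zero s)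
    (by rw [map_zpow₀, sigma_piL hq hσ]) HahnSeries.order
    (fun x y hx hy => HahnSeries.order_mul hx hy)
    (fun x hx => order_sigma hq hσ x hx) hr ?_ W hW
  intro d hd0 hdr hdvd
  rw [order_piL_zpow] at hdvd
  have cop : IsCoprime (r : ℤ) s := Int.isCoprime_iff_gcd_eq_one.mpr hrs
  have hdvd2 : (r : ℤ) ∣ (d : ℤ) := cop.dvd_of_dvd_mul_right hdvd
  have hle : (r : ℤ) ≤ (d : ℤ) := Int.le_of_dvd (by exact_mod_cast hd0) hdvd2
  omega
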